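/- arXiv:1505.00931 — 4 statements merged into one kernel-verified Lean document; each statement's English description precedes it below -/
import Mathlib

section
/- The generating function B(z) = Σ_{n≥0} b_{n+1} z^n of the twisted Stern sequence satisfies B(z) = 2 - (1+z+z^2) B(z^2) as formal power series, where b_0 = 0, b_1 = 1, b_{2n} = -b_n, b_{2n+1} = -(b_n + b_{n+1}) for n ≥ 1. -/
open PowerSeries

/-- B(z^d): the coefficient of z^n is the coefficient of z^(n/d) when d ∣ n, else 0. -/
noncomputable def substPow {R : Type*} [Semiring R] (d : ℕ) (f : PowerSeries R) :
    PowerSeries R :=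
  PowerSeries.mk fun n => if d ∣ n then PowerSeries.coeff (R := R) (n / d) f else 0

/-- The generating function `B(z) = Σ_{n≥0} b_{n+1} z^n` of the twisted Stern
sequence satisfies `B(z) = 2 - (1+z+z^2) B(z^2)` as formal power series. -/
theorem twisted_stern_generating_function_equation
    (b : ℕ → ℤ) (h0 : b 0 = 0) (h1 : b 1 = 1)
    (heven : ∀ n : ℕ, 1 ≤ n → b (2 * n) = -b n)
    (hodd : ∀ n : ℕ, 1 ≤ n → b (2 * n + 1) = -(b n + b (n + 1))) :
    PowerSeries.mk (fun n => b (n + 1)) =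
      2 - (1 + PowerSeries.X + PowerSeries.X ^ 2) *
        substPow 2 (PowerSeries.mk (fun n => b (n + 1))) := by
  ext n
  rw [show ((1 : PowerSeries ℤ) + PowerSeries.X + PowerSeries.X ^ 2)
      = 1 + PowerSeries.X ^ 1 + PowerSeries.X ^ 2 by rw [pow_one]]
  rw [add_mul, add_mul, one_mul]
  simp only [map_sub, map_add, PowerSeries.coeff_X_pow_mul']
  simp only [substPow, PowerSeries.coeff_mk]
  rcases n with _ | _ | m
  · simp [h1, map_ofNat]
  · have h2 : ¬ ((2:ℕ) ∣ 1) := by decide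
    have hc2 : PowerSeries.coeff (R := ℤ) 1 (2 : PowerSeries ℤ) = 0 := by
      rw [show ((2 : PowerSeries ℤ)) = 1 + 1 by norm_num]
      simp [PowerSeries.coeff_one]
    have := heven 1 le_rfl
    norm_num at this
    simp [h2, hc2, this, h1]
  · obtain ⟨k, rfl | rfl⟩ := Nat.even_or_odd' m
    · have hd : (2 : ℕ) ∣ 2 * k + 2 := ⟨k + 1, by ring⟩
      have hd2 : (2 : ℕ) ∣ 2 * k := ⟨k, rfl⟩
      have hnd : ¬ (2 : ℕ) ∣ 2 * k + 1 := by omega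
      have e1 : (2 * k + 2) / 2 = k + 1 := by omega
      have e2 : (2 * k) / 2 = k := by omega
      have hc2 : PowerSeries.coeff (R := ℤ) (2 * k + 2) (2 : PowerSeries ℤ) = 0 := by
        rw [show ((2 : PowerSeries ℤ)) = 1 + 1 by norm_num]
        simp [PowerSeries.coeff_one]
      simp only [Nat.add_sub_cancel, show 2*k+2-1 = 2*k+1 by omega,
        show 2*k+2-2 = 2*k by omega, if_pos hd, if_pos hd2, if_neg hnd,
        if_pos (by omega : 1 ≤ 2*k+2), if_pos (by omega : 2 ≤ 2*k+2), e1, e2, hc2]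
      have := hodd (k + 1) (by omega)
      rw [show 2 * (k + 1) + 1 = 2 * k + 2 + 1 by ring] at this
      rw [this]; ring
    · have hd : (2 : ℕ) ∣ 2 * k + 2 := ⟨k + 1, by ring⟩
      have hnd1 : ¬ (2 : ℕ) ∣ 2 * k + 3 := by omega
      have hnd2 : ¬ (2 : ℕ) ∣ 2 * k + 1 := by omega
      have e1 : (2 * k + 2) / 2 = k + 1 := by omega
      have hc2 : PowerSeries.coeff (R := ℤ) (2 * k + 3) (2 : PowerSeries ℤ) = 0 := by
        rw [show ((2 : PowerSeries ℤ)) = 1 + 1 by norm_num]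
        simp [PowerSeries.coeff_one]
      simp only [show 2*k+1+2-1 = 2*k+2 by omega, show 2*k+1+2-2 = 2*k+1 by omega,
        show 2*k+1+2 = 2*k+3 by omega, if_pos hd, if_neg hnd1, if_neg hnd2,
        if_pos (by omega : 1 ≤ 2*k+3), if_pos (by omega : 2 ≤ 2*k+3), e1, hc2]
      have := heven (k + 2) (by omega)
      rw [show 2 * (k + 2) = 2 * k + 3 + 1 by ring] at this
      rw [this]; ring
end

section
/- The function M(z) = Σ_{j≥0} (−1)^j z^{2^j} / Π_{i=0}^{j−1}(1 − z^{2^i}) satisfies the functional equation M(z^2) = (z − 1)(M(z) − z) for all real z with |z| < 1. -/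
open Finset

noncomputable def Mfun (z : ℝ) : ℝ :=
  ∑' j : ℕ, (-1) ^ j * z ^ 2 ^ j / ∏ i ∈ Finset.range j, (1 - z ^ 2 ^ i)

noncomputable def Mterm (z : ℝ) (j : ℕ) : ℝ :=
  (-1) ^ j * z ^ 2 ^ j / ∏ i ∈ Finset.range j, (1 - z ^ 2 ^ i)

lemma factor_ne (z : ℝ) (hz : |z| < 1) (i : ℕ) : (1 : ℝ) - z ^ 2 ^ i ≠ 0 := by
  have h : |z ^ 2 ^ i| < 1 := by
    rw [abs_pow]; exact pow_lt_one₀ (abs_nonneg z) hz (by positivity)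
  intro h0
  have : z ^ 2 ^ i = 1 := by linarith [sub_eq_zero.mp h0]
  rw [this] at h; norm_num at h

lemma prod_ne (z : ℝ) (hz : |z| < 1) (j : ℕ) :
    ∏ i ∈ Finset.range j, (1 - z ^ 2 ^ i) ≠ 0 :=
  Finset.prod_ne_zero_iff.2 fun i _ => factor_ne z hz i

lemma Mterm_succ (z : ℝ) (hz : |z| < 1) (j : ℕ) :
    Mterm z (j + 1) = Mterm z j * (-(z ^ 2 ^ j) / (1 - z ^ 2 ^ j)) := by
  have hP := prod_ne z hz j
  have hf := factor_ne z hz j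
  unfold Mterm
  rw [Finset.prod_range_succ, pow_succ, pow_succ, pow_mul]
  field_simp

lemma Msummable (z : ℝ) (hz : |z| < 1) : Summable (Mterm z) := by
  apply summable_of_ratio_norm_eventually_le (r := 1/2) (by norm_num)
  have h0 : (0:ℝ) < 1 - |z| := by linarith
  have ht : Filter.Tendsto (fun j : ℕ => |z| ^ j) Filter.atTop (nhds 0) :=
    tendsto_pow_atTop_nhds_zero_of_lt_one (abs_nonneg z) hz
  have hev : ∀ᶠ j : ℕ in Filter.atTop, |z| ^ j < (1 - |z|) / 4 :=
    ht.eventually (eventually_lt_nhds (by linarith))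
  filter_upwards [hev] with j hj
  have hle : |z| ^ 2 ^ j ≤ |z| ^ j :=
    pow_le_pow_of_le_one (abs_nonneg z) hz.le (Nat.le_of_lt (Nat.lt_two_pow_self (n := j)))
  have hfge : (1 - |z|) ≤ |1 - z ^ 2 ^ j| := by
    have h1 : |z ^ 2 ^ j| ≤ |z| := by
      rw [abs_pow]
      calc |z| ^ 2 ^ j ≤ |z| ^ 1 := pow_le_pow_of_le_one (abs_nonneg z) hz.le Nat.one_le_two_pow
        _ = |z| := pow_one _
    calc 1 - |z| ≤ 1 - |z ^ 2 ^ j| := by linarith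
      _ ≤ |1 - z ^ 2 ^ j| := by
          have := abs_sub_abs_le_abs_sub (1:ℝ) (z ^ 2 ^ j)
          simpa using this
  rw [Mterm_succ z hz j]
  rw [norm_mul]
  have hb : ‖-(z ^ 2 ^ j) / (1 - z ^ 2 ^ j)‖ ≤ 1/2 := by
    rw [norm_div, norm_neg, Real.norm_eq_abs, Real.norm_eq_abs]
    rw [div_le_iff₀ (lt_of_lt_of_le h0 hfge)]
    rw [abs_pow]
    calc |z| ^ 2 ^ j ≤ |z| ^ j := hle
      _ ≤ (1 - |z|)/4 := hj.le
      _ ≤ 1/2 * (1 - |z|) := by linarith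
      _ ≤ 1/2 * |1 - z ^ 2 ^ j| := by nlinarith
  calc ‖Mterm z j‖ * ‖-(z ^ 2 ^ j) / (1 - z ^ 2 ^ j)‖ ≤ ‖Mterm z j‖ * (1/2) := by
        exact mul_le_mul_of_nonneg_left hb (norm_nonneg _)
    _ = 1/2 * ‖Mterm z j‖ := by ring

lemma Mterm_key (z : ℝ) (hz : |z| < 1) (j : ℕ) :
    Mterm (z ^ 2) j = (z - 1) * Mterm z (j + 1) := by
  have h1 : (1:ℝ) - z ≠ 0 := by
    have := factor_ne z hz 0; simpa using this
  have hP := prod_ne z hz j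
  have hpow : ∀ i : ℕ, (z ^ 2) ^ 2 ^ i = z ^ 2 ^ (i + 1) := by
    intro i; rw [← pow_mul, pow_succ, mul_comm]
  unfold Mterm
  have hprod : ∏ i ∈ Finset.range (j + 1), (1 - z ^ 2 ^ i)
      = (∏ i ∈ Finset.range j, (1 - (z^2) ^ 2 ^ i)) * (1 - z) := by
    rw [Finset.prod_range_succ']
    simp only [hpow, pow_zero, pow_one]
  rw [hprod, hpow]
  have hP2 : ∏ i ∈ Finset.range j, (1 - (z^2) ^ 2 ^ i) ≠ 0 := by
    have h2 : |z ^ 2| < 1 := by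
      rw [abs_pow]; exact pow_lt_one₀ (abs_nonneg z) hz (by norm_num)
    exact prod_ne (z^2) h2 j
  field_simp
  ring

/-- `M` satisfies `M(z^2) = (z − 1)(M(z) − z)` for all real `z` with `|z| < 1`. -/
theorem Mfun_functional_equation (z : ℝ) (hz : |z| < 1) :
    Mfun (z ^ 2) = (z - 1) * (Mfun z - z) := by
  have hsum := Msummable z hz
  have h0 : Mfun z = Mterm z 0 + ∑' j, Mterm z (j + 1) := Summable.tsum_eq_zero_add hsum
  have h00 : Mterm z 0 = z := by simp [Mterm]
  calc Mfun (z ^ 2) = ∑' j, Mterm (z ^ 2) j := rfl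
    _ = ∑' j, (z - 1) * Mterm z (j + 1) := tsum_congr (Mterm_key z hz)
    _ = (z - 1) * ∑' j, Mterm z (j + 1) := tsum_mul_left
    _ = (z - 1) * (Mfun z - z) := by rw [h0, h00]; ring
end

section
/- Let S(z) = Σ s_k z^k be the power series with s_0 = 1 satisfying S(z^{16}) = −z S(z) + (1+z+z^2) S(z^4). Then every coefficient s_k belongs to {0, 1}. -/
open PowerSeries

lemma key (S : PowerSeries ℤ)
    (hfe : substPow 16 S =
      -PowerSeries.X * S + (1 + PowerSeries.X + PowerSeries.X ^ 2) * substPow 4 S)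
    (m : ℕ) :
    (if 16 ∣ m + 2 then coeff (R := ℤ) ((m+2)/16) S else 0) =
      -(coeff (R := ℤ) (m+1) S) + ((if 4 ∣ m + 2 then coeff (R := ℤ) ((m+2)/4) S else 0)
        + (if 4 ∣ m + 1 then coeff (R := ℤ) ((m+1)/4) S else 0)
        + (if 4 ∣ m then coeff (R := ℤ) (m/4) S else 0)) := by
  have h := congrArg (coeff (R := ℤ) (m+2)) hfe
  rw [neg_mul, add_mul, add_mul, one_mul] at h
  simp only [map_add, map_neg, substPow, coeff_mk, coeff_succ_X_mul,
    PowerSeries.coeff_X_pow_mul] at h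
  linarith [h]

/-- Every coefficient of the Dilcher–Stolarsky series `S`, i.e. the power series
with `S(0) = 1` satisfying `S(z^{16}) = −z S(z) + (1+z+z^2) S(z^4)`, lies in `{0,1}`. -/
theorem dilcherStolarsky_coefficients_zero_one
    (S : PowerSeries ℤ) (h0 : PowerSeries.coeff (R := ℤ) 0 S = 1)
    (hfe : substPow 16 S =
      -PowerSeries.X * S + (1 + PowerSeries.X + PowerSeries.X ^ 2) * substPow 4 S) :
    ∀ k : ℕ, PowerSeries.coeff (R := ℤ) k S = 0 ∨ PowerSeries.coeff (R := ℤ) k S = 1 := by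
  -- s(4k+2) = 0
  have hB : ∀ k : ℕ, coeff (R := ℤ) (4*k+2) S = 0 := by
    intro k
    have h := key S hfe (4*k+1)
    rw [if_neg (by omega), if_neg (by omega), if_neg (by omega), if_neg (by omega)] at h
    have : 4*k+1+1 = 4*k+2 := by omega
    rw [this] at h
    linarith
  -- s(4k+1) = s(k)
  have hC : ∀ k : ℕ, coeff (R := ℤ) (4*k+1) S = coeff (R := ℤ) k S := by
    intro k
    have h := key S hfe (4*k)
    rw [if_neg (by omega), if_neg (by omega), if_neg (by omega),
      if_pos (by omega : (4:ℕ) ∣ 4*k), show 4*k/4 = k by omega] at h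
    linarith
  -- s(4k+4) = s(k+1)
  have hA : ∀ k : ℕ, coeff (R := ℤ) (4*k+4) S = coeff (R := ℤ) (k+1) S := by
    intro k
    have h := key S hfe (4*k+3)
    rw [if_neg (by omega), if_neg (by omega),
      if_pos (by omega : (4:ℕ) ∣ 4*k+3+1), if_neg (by omega),
      show (4*k+3+1)/4 = k+1 by omega, show 4*k+3+1 = 4*k+4 by omega] at h
    linarith
  -- s(4k+3) = s(k+1) - [4 ∣ k+1] s((k+1)/4)
  have hD : ∀ k : ℕ, coeff (R := ℤ) (4*k+3) S
      = coeff (R := ℤ) (k+1) S - (if 4 ∣ k+1 then coeff (R := ℤ) ((k+1)/4) S else 0) := by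
    intro k
    have h := key S hfe (4*k+2)
    rw [show 4*k+2+2 = 4*k+4 by omega, show 4*k+2+1 = 4*k+3 by omega,
      if_neg (show ¬ (4:ℕ) ∣ 4*k+3 by omega), if_neg (show ¬ (4:ℕ) ∣ 4*k+2 by omega),
      if_pos (show (4:ℕ) ∣ 4*k+4 by omega), show (4*k+4)/4 = k+1 by omega] at h
    by_cases h4 : 4 ∣ k+1
    · rw [if_pos (show (16:ℕ) ∣ 4*k+4 by omega),
        show (4*k+4)/16 = (k+1)/4 by omega] at h
      rw [if_pos h4]
      linarith
    · rw [if_neg (show ¬ (16:ℕ) ∣ 4*k+4 by omega)] at h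
      rw [if_neg h4]
      linarith
  -- refined: s(4k+3) is 0 when 4 ∣ k+1
  have hD0 : ∀ k : ℕ, 4 ∣ k+1 → coeff (R := ℤ) (4*k+3) S = 0 := by
    intro k h4
    obtain ⟨j, hj⟩ := h4
    have hj1 : 1 ≤ j := by omega
    have := hA (j-1)
    rw [show 4*(j-1)+4 = 4*j by omega, show (j-1)+1 = j by omega] at this
    rw [hD k, if_pos ⟨j, hj⟩, hj, show 4*j/4 = j by omega,
      show 4*j = 4*(j-1)+4 by omega, hA (j-1), show (j-1)+1 = j by omega]
    ring
  intro k
  induction k using Nat.strong_induction_on with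
  | _ k ih =>
    obtain ⟨q, r, hr, hk⟩ : ∃ q r, r < 4 ∧ k = 4*q + r :=
      ⟨k/4, k%4, Nat.mod_lt _ (by norm_num), (Nat.div_add_mod k 4).symm⟩
    subst hk
    interval_cases r
    · rcases q with _ | p
      · right; simpa using h0
      · rw [show 4*(p+1)+0 = 4*p+4 by ring, hA p]
        exact ih (p+1) (by omega)
    · rw [hC q]; exact ih q (by omega)
    · left; exact hB q
    · by_cases h4 : 4 ∣ q+1
      · left; exact hD0 q h4
      · rw [hD q, if_neg h4, sub_zero]
        exact ih (q+1) (by omega)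
end

section
/- Suppose polynomials A(z), B(z), C(z) with integer coefficients satisfy A(z) T(z) + B(z) M(z) + C(z) = R(z) as formal power series, where T(z) = (1−z) T(z^2) and M(z^2) = (z−1)(M(z) − z). Then A(z^2) T(z) − (z−1)^2 B(z^2) M(z) + [z(z−1)^2 B(z^2) + (1−z) C(z^2)] = (1−z) R(z^2), and the order of vanishing at 0 of (1−z) R(z^2) is twice that of R(z) (when R ≠ 0). -/
open PowerSeries Polynomial

/-- An integer polynomial viewed as a power series over ℚ. -/
noncomputable def toPS (p : Polynomial ℤ) : PowerSeries ℚ :=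
  ((p.map (Int.castRingHom ℚ) : Polynomial ℚ) : PowerSeries ℚ)

open Finset

lemma substPow_coeff (f : PowerSeries ℚ) (n : ℕ) :
    PowerSeries.coeff (R := ℚ) n (substPow 2 f) =
      if 2 ∣ n then PowerSeries.coeff (R := ℚ) (n / 2) f else 0 := by
  simp [substPow]

lemma substPow_two_mul (f g : PowerSeries ℚ) :
    substPow 2 (f * g) = substPow 2 f * substPow 2 g := by
  ext n
  rw [PowerSeries.coeff_mul, substPow_coeff]
  simp only [substPow_coeff]
  rcases Nat.even_or_odd n with ⟨m, hm⟩ | ⟨k, hk⟩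
  · subst hm
    rw [if_pos ⟨m, by omega⟩, show (m + m) / 2 = m by omega, PowerSeries.coeff_mul]
    have hsub : Finset.image (fun q : ℕ × ℕ => (2 * q.1, 2 * q.2)) (antidiagonal m)
        ⊆ antidiagonal (m + m) := by
      intro p hp
      simp only [Finset.mem_image, HasAntidiagonal.mem_antidiagonal] at *
      obtain ⟨a, hab, rfl⟩ := hp
      omega
    have hzero : ∀ p ∈ antidiagonal (m + m),
        p ∉ Finset.image (fun q : ℕ × ℕ => (2 * q.1, 2 * q.2)) (antidiagonal m) →
        (if 2 ∣ p.1 then (PowerSeries.coeff (R := ℚ) (p.1 / 2)) f else 0) *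
          (if 2 ∣ p.2 then (PowerSeries.coeff (R := ℚ) (p.2 / 2)) g else 0) = 0 := by
      intro p hp hpn
      rw [HasAntidiagonal.mem_antidiagonal] at hp
      by_cases h1 : 2 ∣ p.1
      · exfalso
        apply hpn
        obtain ⟨a, ha⟩ := h1
        refine Finset.mem_image.2 ⟨(a, m - a), ?_, ?_⟩
        · rw [HasAntidiagonal.mem_antidiagonal]; omega
        · exact Prod.ext (by omega) (by simp; omega)
      · rw [if_neg h1, zero_mul]
    have hinj : ∀ a ∈ antidiagonal m, ∀ b ∈ antidiagonal m,
        (fun q : ℕ × ℕ => (2 * q.1, 2 * q.2)) a = (fun q : ℕ × ℕ => (2 * q.1, 2 * q.2)) b →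
        a = b := by
      intro a _ b _ h
      obtain ⟨h1, h2⟩ := Prod.mk.inj h
      exact Prod.ext (by omega) (by omega)
    rw [← Finset.sum_subset hsub hzero, Finset.sum_image hinj]
    refine Finset.sum_congr rfl fun p hp => ?_
    rw [if_pos ⟨p.1, rfl⟩, if_pos ⟨p.2, rfl⟩,
      Nat.mul_div_cancel_left _ (by norm_num), Nat.mul_div_cancel_left _ (by norm_num)]
  · rw [if_neg (by omega)]
    refine (Finset.sum_eq_zero fun p hp => ?_).symm
    rw [HasAntidiagonal.mem_antidiagonal] at hp
    by_cases h1 : 2 ∣ p.1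
    · rw [if_neg (show ¬ 2 ∣ p.2 by omega), mul_zero]
    · rw [if_neg h1, zero_mul]

lemma substPow_two_add (f g : PowerSeries ℚ) :
    substPow 2 (f + g) = substPow 2 f + substPow 2 g := by
  ext n
  simp only [map_add, substPow_coeff]
  split <;> simp

lemma substPow_two_one : substPow 2 (1 : PowerSeries ℚ) = 1 := by
  ext n
  rw [substPow_coeff]
  by_cases h : 2 ∣ n
  · obtain ⟨m, rfl⟩ := h
    rw [if_pos ⟨m, rfl⟩, Nat.mul_div_cancel_left _ (by norm_num),
      PowerSeries.coeff_one, PowerSeries.coeff_one]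
    rcases m with _ | m <;> simp
  · rw [if_neg h, PowerSeries.coeff_one, if_neg (by omega)]

noncomputable def S2 : PowerSeries ℚ →+* PowerSeries ℚ where
  toFun := substPow 2
  map_one' := substPow_two_one
  map_mul' := substPow_two_mul
  map_zero' := by ext n; rw [substPow_coeff]; simp
  map_add' := substPow_two_add

lemma S2_C (a : ℚ) : S2 (PowerSeries.C (R := ℚ) a) = PowerSeries.C (R := ℚ) a := by
  ext n
  show (PowerSeries.coeff (R := ℚ) n) (substPow 2 _) = _
  rw [substPow_coeff]
  by_cases h : 2 ∣ n
  · obtain ⟨m, rfl⟩ := h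
    rw [if_pos ⟨m, rfl⟩, Nat.mul_div_cancel_left _ (by norm_num),
      PowerSeries.coeff_C, PowerSeries.coeff_C]
    rcases m with _ | m <;> simp
  · rw [if_neg h, PowerSeries.coeff_C, if_neg (by omega)]

lemma S2_X : S2 (PowerSeries.X : PowerSeries ℚ) = PowerSeries.X ^ 2 := by
  ext n
  show (PowerSeries.coeff (R := ℚ) n) (substPow 2 _) = _
  rw [substPow_coeff, PowerSeries.coeff_X_pow]
  by_cases h : 2 ∣ n
  · obtain ⟨m, rfl⟩ := h
    rw [if_pos ⟨m, rfl⟩, Nat.mul_div_cancel_left _ (by norm_num), PowerSeries.coeff_X]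
    rcases m with _ | _ | m <;> simp
  · rw [if_neg h, if_neg (by omega)]

noncomputable def toPSHom : Polynomial ℤ →+* PowerSeries ℚ :=
  (Polynomial.coeToPowerSeries.ringHom).comp (Polynomial.mapRingHom (Int.castRingHom ℚ))

lemma toPS_eq (p : Polynomial ℤ) : toPS p = toPSHom p := rfl

lemma S2_coe (q : Polynomial ℚ) :
    S2 (q : PowerSeries ℚ) = ((q.comp (Polynomial.X ^ 2) : Polynomial ℚ) : PowerSeries ℚ) := by
  have : S2.comp (Polynomial.coeToPowerSeries.ringHom) =
      (Polynomial.coeToPowerSeries.ringHom (R := ℚ)).comp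
        (Polynomial.eval₂RingHom Polynomial.C (Polynomial.X ^ 2)) := by
    apply Polynomial.ringHom_ext
    · intro a
      simp [S2_C]
    · simp [S2_X]
  have h := RingHom.congr_fun this q
  simpa [Polynomial.comp] using h

lemma S2_toPS (p : Polynomial ℤ) :
    S2 (toPS p) = toPS (p.comp (Polynomial.X ^ 2)) := by
  rw [toPS, S2_coe, toPS, Polynomial.map_comp]
  simp

/-- If `A T + B M + C = R` with `T(z) = (1−z)T(z^2)` and `M(z^2) = (z−1)(M(z)−z)`,
then `A(z^2) T(z) − (z−1)^2 B(z^2) M(z) + [z(z−1)^2 B(z^2) + (1−z) C(z^2)]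
= (1−z) R(z^2)`, and `ord((1−z) R(z^2)) = 2 ord(R)` when `R ≠ 0`. -/
theorem TM_approximation_iteration
    (A B C : Polynomial ℤ) (T M R : PowerSeries ℚ)
    (hT : T = (1 - PowerSeries.X) * substPow 2 T)
    (hM : substPow 2 M = (PowerSeries.X - 1) * (M - PowerSeries.X))
    (hR : toPS A * T + toPS B * M + toPS C = R) :
    toPS (A.comp (Polynomial.X ^ 2)) * T
        - toPS ((Polynomial.X - 1) ^ 2 * B.comp (Polynomial.X ^ 2)) * M
        + toPS (Polynomial.X * (Polynomial.X - 1) ^ 2 * B.comp (Polynomial.X ^ 2)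
            + (1 - Polynomial.X) * C.comp (Polynomial.X ^ 2))
      = (1 - PowerSeries.X) * substPow 2 R ∧
    (R ≠ 0 → ((1 - PowerSeries.X) * substPow 2 R).order = 2 * R.order) := by
  have hSR : substPow 2 R = S2 R := rfl
  have hST : substPow 2 T = S2 T := rfl
  have hSM : substPow 2 M = S2 M := rfl
  have hX : toPS Polynomial.X = PowerSeries.X := by
    simp [toPS]
  have h1 : toPS 1 = 1 := by simp [toPS]
  constructor
  · have key : toPS (A.comp (Polynomial.X ^ 2)) * S2 T
        + toPS (B.comp (Polynomial.X ^ 2)) * S2 M + toPS (C.comp (Polynomial.X ^ 2)) = S2 R := by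
      rw [← S2_toPS, ← S2_toPS, ← S2_toPS, ← map_mul, ← map_mul, ← map_add, ← map_add, hR]
    simp only [toPS_eq, map_mul, map_add, map_sub, map_pow, map_one] at *
    rw [hSR]
    have hX' : toPSHom Polynomial.X = PowerSeries.X := hX
    rw [hX'] at *
    rw [hST] at hT
    rw [hSM] at hM
    linear_combination (1 - PowerSeries.X) * key
      + toPSHom (A.comp (Polynomial.X ^ 2)) * hT
      - (1 - PowerSeries.X) * toPSHom (B.comp (Polynomial.X ^ 2)) * hM
  · intro hRne
    rw [PowerSeries.order_mul]
    have h0 : (1 - PowerSeries.X : PowerSeries ℚ).order = 0 := by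
      rw [show (0 : ℕ∞) = ((0 : ℕ) : ℕ∞) from rfl, PowerSeries.order_eq_nat]
      exact ⟨by simp, fun i hi => absurd hi (by omega)⟩
    rw [h0, zero_add]
    have htop := PowerSeries.order_eq_top.not.2 hRne
    obtain ⟨n, hn⟩ : ∃ n : ℕ, R.order = (n : ℕ∞) := by
      cases h : R.order with
      | top => exact absurd h htop
      | coe n => exact ⟨n, rfl⟩
    obtain ⟨hcoef, hlt⟩ := PowerSeries.order_eq_nat.1 hn
    rw [hn, show (2 : ℕ∞) * (n : ℕ∞) = ((2 * n : ℕ) : ℕ∞) by push_cast; ring]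
    rw [PowerSeries.order_eq_nat]
    constructor
    · rw [substPow_coeff, if_pos ⟨n, by omega⟩, show 2 * n / 2 = n by omega]
      exact hcoef
    · intro i hi
      rw [substPow_coeff]
      split
      · exact hlt _ (by omega)
      · rfl
end
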